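/- Let N ≥ 1 and suppose (s₁,…,s_N; q₂,…,q_{N+1}) maximizes the expected virtual surplus Σ_{k=1}^{N+1} ∫_{s_{k−1}}^{s_k} (t·v(q_k) − c(q_k))·h(t) dt over all 0 = s₀ ≤ s₁ ≤ … ≤ s_N ≤ s_{N+1} = 1 and 0 = q₁ ≤ q₂ ≤ … ≤ q_{N+1}, and suppose the maximizer satisfies 0 < s₁ < … < s_N < 1. Set x₁ = 0 and x_k = φ^m(s_{k−1}, s_k) for k = 2,…,N+1. Then q_k = q*(x_k) for k = 2,…,N+1 and s_k = μ^m(x_k, x_{k+1}) for k = 1,…,N. -/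

import Mathlib

open MeasureTheory Set

/-- The mean of the "density" `g` conditional on the interval `(a, b)`. -/
noncomputable def condMean (g : ℝ → ℝ) (a b : ℝ) : ℝ :=
  (∫ t in a..b, t * g t) / (∫ t in a..b, g t)

/-- The seller's expected virtual surplus from the menu given by type cutoffs `s` and
qualities `q`: `Σ_{k=1}^{N+1} ∫_{s (k-1)}^{s k} (t·v(q k) − c(q k))·h(t) dt`. -/
noncomputable def menuSurplus (h v c : ℝ → ℝ) (N : ℕ) (s q : ℕ → ℝ) : ℝ :=
  ∑ k ∈ Finset.Icc 1 (N + 1),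
    ∫ t in (s (k - 1))..(s k), (t * v (q k) - c (q k)) * h t

lemma condMean_mem_Ioo {g : ℝ → ℝ} {a b : ℝ} (hg : Continuous g)
    (hab : a < b) (hpos : ∀ t ∈ Icc a b, 0 < g t) : condMean g a b ∈ Ioo a b := by
  have hH : 0 < ∫ t in a..b, g t :=
    intervalIntegral.intervalIntegral_pos_of_pos_on (hg.intervalIntegrable a b)
      (fun t ht => hpos t ⟨ht.1.le, ht.2.le⟩) hab
  have h1 : 0 < ∫ t in a..b, (t - a) * g t :=
    intervalIntegral.intervalIntegral_pos_of_pos_on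
      (((continuous_id.sub continuous_const).mul hg).intervalIntegrable a b)
      (fun t ht => mul_pos (sub_pos.mpr ht.1) (hpos t ⟨ht.1.le, ht.2.le⟩)) hab
  have h2 : 0 < ∫ t in a..b, (b - t) * g t :=
    intervalIntegral.intervalIntegral_pos_of_pos_on
      (((continuous_const.sub continuous_id).mul hg).intervalIntegrable a b)
      (fun t ht => mul_pos (sub_pos.mpr ht.2) (hpos t ⟨ht.1.le, ht.2.le⟩)) hab
  have hint1 : IntervalIntegrable (fun t => t * g t) volume a b :=
    (continuous_id.mul hg).intervalIntegrable a b
  have e1 : ∫ t in a..b, (t - a) * g t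
      = (∫ t in a..b, t * g t) - a * ∫ t in a..b, g t := by
    calc ∫ t in a..b, (t - a) * g t = ∫ t in a..b, (t * g t - a * g t) :=
          intervalIntegral.integral_congr (fun t _ => by ring)
      _ = (∫ t in a..b, t * g t) - ∫ t in a..b, a * g t :=
          intervalIntegral.integral_sub hint1 (((continuous_const.mul hg : Continuous fun t => a * g t)).intervalIntegrable a b)
      _ = _ := by rw [intervalIntegral.integral_const_mul]
  have e2 : ∫ t in a..b, (b - t) * g t
      = b * (∫ t in a..b, g t) - ∫ t in a..b, t * g t := by
    calc ∫ t in a..b, (b - t) * g t = ∫ t in a..b, (b * g t - t * g t) :=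
          intervalIntegral.integral_congr (fun t _ => by ring)
      _ = (∫ t in a..b, b * g t) - ∫ t in a..b, t * g t :=
          intervalIntegral.integral_sub (((continuous_const.mul hg : Continuous fun t => b * g t)).intervalIntegrable a b) hint1
      _ = _ := by rw [intervalIntegral.integral_const_mul]
  constructor
  · rw [condMean, lt_div_iff₀ hH]; linarith
  · rw [condMean, div_lt_iff₀ hH]; linarith

/-- dual expectations characterization of the optimal finite menu in
the coarse nonlinear pricing problem. -/
theorem stmt_19 (h v c π qstar : ℝ → ℝ) (N : ℕ) (hN : 1 ≤ N)
    (hh_cont : Continuous h) (hh_pos : ∀ t ∈ Icc (0:ℝ) 1, 0 < h t)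
    (hh_prob : (∫ t in (0:ℝ)..1, h t) = 1)
    (hv : ContDiff ℝ 2 v) (hc : ContDiff ℝ 2 c)
    (hv' : ∀ q, 0 ≤ q → 0 < deriv v q) (hv'' : ∀ q, 0 ≤ q → deriv (deriv v) q < 0)
    (hc' : ∀ q, 0 ≤ q → 0 < deriv c q) (hc'' : ∀ q, 0 ≤ q → 0 < deriv (deriv c) q)
    (hv0 : v 0 = 0) (hc0 : c 0 = 0)
    (hqstar : ∀ t ∈ Ioc (0:ℝ) 1, 0 ≤ qstar t ∧
      (∀ q, 0 ≤ q → t * v q - c q ≤ t * v (qstar t) - c (qstar t)) ∧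
      (∀ q, 0 ≤ q → t * v q - c q = t * v (qstar t) - c (qstar t) → q = qstar t))
    (hπ : ContDiff ℝ 2 π)
    (hπval : ∀ t ∈ Ioc (0:ℝ) 1, π t = t * v (qstar t) - c (qstar t))
    (hπ0 : π 0 = 0) (hπ'0 : deriv π 0 = 0)
    (hπ'' : ∀ t ∈ Ioc (0:ℝ) 1, 0 < deriv (deriv π) t)
    (s q : ℕ → ℝ)
    (hs0 : s 0 = 0) (hslast : s (N + 1) = 1)
    (hs_strict : ∀ k ≤ N, s k < s (k + 1))
    (hq1 : q 1 = 0) (hq_mono : ∀ k, 1 ≤ k → k ≤ N → q k ≤ q (k + 1))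
    (hq_nonneg : ∀ k, 1 ≤ k → k ≤ N + 1 → 0 ≤ q k)
    (hmax : ∀ s' q' : ℕ → ℝ, s' 0 = 0 → s' (N + 1) = 1 →
      (∀ k ≤ N, s' k ≤ s' (k + 1)) → q' 1 = 0 →
      (∀ k, 1 ≤ k → k ≤ N → q' k ≤ q' (k + 1)) →
      (∀ k, 1 ≤ k → k ≤ N + 1 → 0 ≤ q' k) →
      menuSurplus h v c N s' q' ≤ menuSurplus h v c N s q)
    (x : ℕ → ℝ) (hx1 : x 1 = 0)
    (hxk : ∀ k, 2 ≤ k → k ≤ N + 1 → x k = condMean h (s (k - 1)) (s k)) :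
    (∀ k, 2 ≤ k → k ≤ N + 1 → q k = qstar (x k)) ∧
    (∀ k, 1 ≤ k → k ≤ N → s k = condMean (deriv (deriv π)) (x k) (x (k + 1))) := by
  -- smoothness facts for π
  have hπ2 : ContDiff ℝ ((1:WithTop ℕ∞)+1) π := by norm_num; exact hπ
  obtain ⟨dπ, -, hπ1⟩ := contDiff_succ_iff_deriv.mp hπ2
  have hπ1' : ContDiff ℝ ((0:WithTop ℕ∞)+1) (deriv π) := by norm_num; exact hπ1
  obtain ⟨dπ', -, hπ0'⟩ := contDiff_succ_iff_deriv.mp hπ1'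
  have cπ'' : Continuous (deriv (deriv π)) := hπ0'.continuous
  -- strict monotonicity of v on [0, ∞)
  have vmono : StrictMonoOn v (Ici 0) :=
    strictMonoOn_of_deriv_pos (convex_Ici 0) hv.continuous.continuousOn
      (fun t ht => hv' t (le_of_lt (by simpa [interior_Ici] using ht)))
  -- monotonicity of s
  have sstrict : ∀ i j : ℕ, i < j → j ≤ N + 1 → s i < s j := by
    intro i j
    induction j with
    | zero => omega
    | succ n ih =>
      intro hij hjn
      rcases Nat.lt_succ_iff_lt_or_eq.mp hij with hlt | heq
      · exact lt_trans (ih hlt (by omega)) (hs_strict n (by omega))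
      · subst heq; exact hs_strict i (by omega)
  have smono : ∀ i j : ℕ, i ≤ j → j ≤ N + 1 → s i ≤ s j := by
    intro i j hij hj
    rcases eq_or_lt_of_le hij with rfl | hlt
    · exact le_rfl
    · exact (sstrict i j hlt hj).le
  have sIcc : ∀ j, j ≤ N + 1 → s j ∈ Icc (0:ℝ) 1 := by
    intro j hj
    constructor
    · rw [← hs0]; exact smono 0 j (Nat.zero_le _) hj
    · rw [← hslast]; exact smono j (N+1) hj le_rfl
  -- positivity of segment masses
  have Hpos : ∀ i, 1 ≤ i → i ≤ N + 1 → 0 < ∫ t in s (i-1)..s i, h t := by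
    intro i h1 h2
    refine intervalIntegral.intervalIntegral_pos_of_pos_on (hh_cont.intervalIntegrable _ _)
      (fun t ht => hh_pos t ⟨le_trans (sIcc (i-1) (by omega)).1 ht.1.le,
        le_trans ht.2.le (sIcc i h2).2⟩) (sstrict (i-1) i (by omega) h2)
  -- conditional means lie strictly inside their segments
  have hx_mem : ∀ k, 2 ≤ k → k ≤ N + 1 → x k ∈ Ioo (s (k-1)) (s k) := by
    intro k h2 hle
    rw [hxk k h2 hle]
    exact condMean_mem_Ioo hh_cont (sstrict (k-1) k (by omega) hle)
      (fun t ht => hh_pos t ⟨le_trans (sIcc (k-1) (by omega)).1 ht.1,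
        le_trans ht.2 (sIcc k hle).2⟩)
  have hxIoo : ∀ k, 2 ≤ k → k ≤ N + 1 → x k ∈ Ioo (0:ℝ) 1 := by
    intro k h2 hle
    have := hx_mem k h2 hle
    exact ⟨lt_of_le_of_lt (sIcc (k-1) (by omega)).1 this.1,
      lt_of_lt_of_le this.2 (sIcc k hle).2⟩
  -- splitting each segment integral
  have integ_split : ∀ (a b V C : ℝ), (∫ t in a..b, (t * V - C) * h t)
      = V * (∫ t in a..b, t * h t) - C * (∫ t in a..b, h t) := by
    intro a b V C
    calc (∫ t in a..b, (t * V - C) * h t)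
        = ∫ t in a..b, (V * (t * h t) - C * h t) :=
          intervalIntegral.integral_congr (fun t _ => by ring)
      _ = (∫ t in a..b, V * (t * h t)) - ∫ t in a..b, C * h t :=
          intervalIntegral.integral_sub
            ((continuous_const.mul (continuous_id.mul hh_cont)).intervalIntegrable a b)
            ((continuous_const.mul hh_cont).intervalIntegrable a b)
      _ = _ := by rw [intervalIntegral.integral_const_mul, intervalIntegral.integral_const_mul]
  have Teq : ∀ i, 2 ≤ i → i ≤ N + 1 →
      (∫ t in s (i-1)..s i, t * h t) = x i * ∫ t in s (i-1)..s i, h t := by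
    intro i h2 hle
    rw [hxk i h2 hle, condMean, div_mul_cancel₀ _ (ne_of_gt (Hpos i (by omega) hle))]
  have key_term : ∀ i, 2 ≤ i → i ≤ N + 1 → ∀ y : ℝ,
      (∫ t in s (i-1)..s i, (t * v y - c y) * h t)
      = (∫ t in s (i-1)..s i, h t) * (x i * v y - c y) := by
    intro i h2 hle y
    rw [integ_split, Teq i h2 hle]; ring
  -- monotonicity of qstar
  have qmono : ∀ a b : ℝ, a ∈ Ioc (0:ℝ) 1 → b ∈ Ioc (0:ℝ) 1 → a < b →
      qstar a ≤ qstar b := by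
    intro a b ha hb hab
    obtain ⟨ha0, hamax, -⟩ := hqstar a ha
    obtain ⟨hb0, hbmax, -⟩ := hqstar b hb
    have h1 := hamax (qstar b) hb0
    have h2 := hbmax (qstar a) ha0
    have hvle : v (qstar a) ≤ v (qstar b) := by nlinarith
    by_contra hlt
    push_neg at hlt
    exact absurd (vmono hb0 ha0 hlt) (not_lt.mpr hvle)
  -- STEP A : optimal qualities
  set Q : ℕ → ℝ := fun j => if j < 2 then 0 else if j ≤ N + 1 then qstar (x j)
    else qstar (x (N+1)) with hQdef
  have hQ1 : Q 1 = 0 := by simp [hQdef]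
  have hQmid : ∀ j, 2 ≤ j → j ≤ N + 1 → Q j = qstar (x j) := by
    intro j h2 hle
    simp only [hQdef]
    rw [if_neg (by omega), if_pos hle]
  have hQnonneg : ∀ j, 1 ≤ j → j ≤ N + 1 → 0 ≤ Q j := by
    intro j h1 hle
    rcases Nat.lt_or_ge j 2 with hj | hj
    · simp only [hQdef]; rw [if_pos hj]
    · rw [hQmid j hj hle]
      exact (hqstar (x j) ⟨(hxIoo j hj hle).1, (hxIoo j hj hle).2.le⟩).1
  have hQmono : ∀ j, 1 ≤ j → j ≤ N → Q j ≤ Q (j+1) := by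
    intro j h1 hle
    rcases Nat.lt_or_ge j 2 with hj | hj
    · have hj1 : j = 1 := by omega
      subst hj1
      rw [hQ1]
      exact hQnonneg 2 (by omega) (by omega)
    · rw [hQmid j hj (by omega), hQmid (j+1) (by omega) (by omega)]
      have h1' := hx_mem j hj (by omega)
      have h2' := hx_mem (j+1) (by omega) (by omega)
      have hxx : x j < x (j+1) := by
        have : s ((j+1)-1) = s j := by norm_num
        exact lt_trans h1'.2 (by rw [← this]; exact h2'.1)
      have ha := hxIoo j hj (by omega)
      have hb := hxIoo (j+1) (by omega) (by omega)
      exact qmono (x j) (x (j+1)) ⟨ha.1, ha.2.le⟩ ⟨hb.1, hb.2.le⟩ hxx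
  have stepA : ∀ k, 2 ≤ k → k ≤ N + 1 → q k = qstar (x k) := by
    intro k hk2 hkN
    by_contra hne
    have hlt : menuSurplus h v c N s q < menuSurplus h v c N s Q := by
      unfold menuSurplus
      apply Finset.sum_lt_sum
      · intro i hi
        obtain ⟨hi1, hi2⟩ := Finset.mem_Icc.mp hi
        rcases Nat.lt_or_ge i 2 with hilt | hige
        · have : i = 1 := by omega
          subst this
          rw [hq1, hQ1]
        · rw [key_term i hige hi2 (q i), key_term i hige hi2 (Q i), hQmid i hige hi2]
          refine mul_le_mul_of_nonneg_left ?_ (Hpos i (by omega) hi2).le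
          exact (hqstar (x i) ⟨(hxIoo i hige hi2).1, (hxIoo i hige hi2).2.le⟩).2.1
            (q i) (hq_nonneg i (by omega) hi2)
      · refine ⟨k, Finset.mem_Icc.mpr ⟨by omega, hkN⟩, ?_⟩
        rw [key_term k hk2 hkN (q k), key_term k hk2 hkN (Q k), hQmid k hk2 hkN]
        refine mul_lt_mul_of_pos_left ?_ (Hpos k (by omega) hkN)
        have hxm : x k ∈ Ioc (0:ℝ) 1 := ⟨(hxIoo k hk2 hkN).1, (hxIoo k hk2 hkN).2.le⟩
        refine lt_of_le_of_ne ((hqstar (x k) hxm).2.1 (q k) (hq_nonneg k (by omega) hkN)) ?_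
        intro heq
        exact hne ((hqstar (x k) hxm).2.2 (q k) (hq_nonneg k (by omega) hkN) heq)
    exact absurd (hmax s Q hs0 hslast (fun j hj => (hs_strict j hj).le) hQ1 hQmono hQnonneg)
      (not_le.mpr hlt)
  -- envelope theorem
  have envlem : ∀ y ∈ Ioo (0:ℝ) 1, deriv π y = v (qstar y) := by
    intro y hy
    have hyIoc : y ∈ Ioc (0:ℝ) 1 := ⟨hy.1, hy.2.le⟩
    obtain ⟨hq0, -, -⟩ := hqstar y hyIoc
    have hloc : IsLocalMin (fun t => π t - t * v (qstar y)) y := by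
      have : ∀ᶠ t in nhds y, (fun t => π t - t * v (qstar y)) y ≤
          (fun t => π t - t * v (qstar y)) t := by
        filter_upwards [Ioo_mem_nhds hy.1 hy.2] with t ht
        have htIoc : t ∈ Ioc (0:ℝ) 1 := ⟨ht.1, ht.2.le⟩
        have h1 := (hqstar t htIoc).2.1 (qstar y) hq0
        show π y - y * v (qstar y) ≤ π t - t * v (qstar y)
        rw [hπval t htIoc, hπval y hyIoc]
        linarith
      exact this
    have hd : HasDerivAt (fun t => π t - t * v (qstar y)) (deriv π y - v (qstar y)) y := by
      have h2 : HasDerivAt (fun t : ℝ => t * v (qstar y)) (v (qstar y)) y := by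
        simpa using (hasDerivAt_id y).mul_const (v (qstar y))
      exact ((dπ y).hasDerivAt).sub h2
    have := hloc.hasDerivAt_eq_zero hd
    linarith
  -- FTC facts
  have ftc1 : ∀ a b : ℝ, (∫ t in a..b, deriv (deriv π) t) = deriv π b - deriv π a :=
    fun a b => intervalIntegral.integral_deriv_eq_sub (fun t _ => dπ' t)
      (cπ''.intervalIntegrable a b)
  have ftc2 : ∀ a b : ℝ, (∫ t in a..b, t * deriv (deriv π) t)
      = (b * deriv π b - π b) - (a * deriv π a - π a) := by
    intro a b
    apply intervalIntegral.integral_eq_sub_of_hasDerivAt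
      (f := fun t => t * deriv π t - π t)
    · intro t _
      have h1 : HasDerivAt (fun t => t * deriv π t)
          (1 * deriv π t + t * deriv (deriv π) t) t :=
        (hasDerivAt_id t).mul ((dπ' t).hasDerivAt)
      have h2 := h1.sub ((dπ t).hasDerivAt)
      convert h2 using 1
      · rfl
      · ring
    · exact (continuous_id.mul cπ'').intervalIntegrable a b
  refine ⟨stepA, ?_⟩
  -- STEP B : optimal cutoffs
  intro k hk1 hkN
  -- first-order condition at s k
  have foc : s k * v (q k) - c (q k) = s k * v (q (k+1)) - c (q (k+1)) := by
    set F : ℝ → ℝ := fun t => (t * v (q k) - c (q k)) * h t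
      - (t * v (q (k+1)) - c (q (k+1))) * h t with hF
    have hFc : Continuous F := by
      apply Continuous.sub <;>
        exact ((continuous_id.mul continuous_const).sub continuous_const).mul hh_cont
    have hAc : Continuous (fun t => (t * v (q k) - c (q k)) * h t) :=
      ((continuous_id.mul continuous_const).sub continuous_const).mul hh_cont
    have hBc : Continuous (fun t => (t * v (q (k+1)) - c (q (k+1))) * h t) :=
      ((continuous_id.mul continuous_const).sub continuous_const).mul hh_cont
    have hdiff : ∀ w : ℝ, menuSurplus h v c N (Function.update s k w) q
        - menuSurplus h v c N s q = ∫ t in (s k)..w, F t := by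
      intro w
      unfold menuSurplus
      rw [← Finset.sum_sub_distrib]
      set f : ℕ → ℝ := fun j =>
        (∫ t in (Function.update s k w (j-1))..(Function.update s k w j),
          (t * v (q j) - c (q j)) * h t)
        - ∫ t in (s (j-1))..(s j), (t * v (q j) - c (q j)) * h t with hf
      have hk_mem : k ∈ Finset.Icc 1 (N+1) := Finset.mem_Icc.mpr ⟨hk1, by omega⟩
      have hk1_mem : k+1 ∈ (Finset.Icc 1 (N+1)).erase k :=
        Finset.mem_erase.mpr ⟨by omega, Finset.mem_Icc.mpr ⟨by omega, by omega⟩⟩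
      rw [← Finset.add_sum_erase _ f hk_mem, ← Finset.add_sum_erase _ f hk1_mem]
      have hrest : ∑ j ∈ ((Finset.Icc 1 (N+1)).erase k).erase (k+1), f j = 0 := by
        apply Finset.sum_eq_zero
        intro j hj
        have hj1 := Finset.mem_erase.mp hj
        have hj2 := Finset.mem_erase.mp hj1.2
        obtain ⟨hjl, hju⟩ := Finset.mem_Icc.mp hj2.2
        have e1 : Function.update s k w j = s j := Function.update_of_ne hj2.1 _ _
        have e2 : Function.update s k w (j-1) = s (j-1) :=
          Function.update_of_ne (by omega) _ _
        simp only [hf, e1, e2, sub_self]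
      rw [hrest, add_zero]
      have efk : f k = ∫ t in (s k)..w, (t * v (q k) - c (q k)) * h t := by
        have e1 : Function.update s k w k = w := Function.update_self _ _ _
        have e2 : Function.update s k w (k-1) = s (k-1) :=
          Function.update_of_ne (by omega) _ _
        have e3 : (∫ t in (s (k-1))..(s k), (t * v (q k) - c (q k)) * h t)
            + ∫ t in (s k)..w, (t * v (q k) - c (q k)) * h t
            = ∫ t in (s (k-1))..w, (t * v (q k) - c (q k)) * h t :=
          intervalIntegral.integral_add_adjacent_intervals
            (hAc.intervalIntegrable _ _) (hAc.intervalIntegrable _ _)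
        simp only [hf, e1, e2]
        linarith
      have efk1 : f (k+1) = -∫ t in (s k)..w, (t * v (q (k+1)) - c (q (k+1))) * h t := by
        have e1 : Function.update s k w (k+1) = s (k+1) :=
          Function.update_of_ne (by omega) _ _
        have e2 : Function.update s k w ((k+1)-1) = w := by
          have : (k+1)-1 = k := by omega
          rw [this]; exact Function.update_self _ _ _
        have e3 : (∫ t in (s k)..w, (t * v (q (k+1)) - c (q (k+1))) * h t)
            + ∫ t in w..(s (k+1)), (t * v (q (k+1)) - c (q (k+1))) * h t
            = ∫ t in (s k)..(s (k+1)), (t * v (q (k+1)) - c (q (k+1))) * h t :=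
          intervalIntegral.integral_add_adjacent_intervals
            (hBc.intervalIntegrable _ _) (hBc.intervalIntegrable _ _)
        have e4 : (k+1)-1 = k := by omega
        simp only [hf, e1, e2, e4, Function.update_self]
        linarith
      have esub : (∫ t in (s k)..w, F t)
          = (∫ t in (s k)..w, (t * v (q k) - c (q k)) * h t)
          - ∫ t in (s k)..w, (t * v (q (k+1)) - c (q (k+1))) * h t :=
        intervalIntegral.integral_sub (hAc.intervalIntegrable _ _) (hBc.intervalIntegrable _ _)
      rw [efk, efk1, esub]
      ring
    -- local maximality of Φ at s k
    set Φ : ℝ → ℝ := fun w => ∫ t in (s k)..w, F t with hΦ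
    have hup_le : ∀ w ∈ Ioo (s (k-1)) (s (k+1)), Φ w ≤ 0 := by
      intro w hw
      have hupd0 : Function.update s k w 0 = 0 := by
        rw [Function.update_of_ne (by omega)]; exact hs0
      have hupdlast : Function.update s k w (N+1) = 1 := by
        rw [Function.update_of_ne (by omega)]; exact hslast
      have hupdmono : ∀ j, j ≤ N → Function.update s k w j ≤ Function.update s k w (j+1) := by
        intro j hj
        by_cases hjk : j = k
        · subst hjk
          rw [Function.update_self, Function.update_of_ne (by omega)]
          exact hw.2.le
        · by_cases hjk1 : j + 1 = k
          · rw [Function.update_of_ne hjk, hjk1, Function.update_self]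
            have : j = k - 1 := by omega
            rw [this]
            exact hw.1.le
          · rw [Function.update_of_ne hjk, Function.update_of_ne hjk1]
            exact (hs_strict j hj).le
      have := hmax (Function.update s k w) q hupd0 hupdlast hupdmono hq1 hq_mono hq_nonneg
      calc Φ w = menuSurplus h v c N (Function.update s k w) q
            - menuSurplus h v c N s q := (hdiff w).symm
        _ ≤ 0 := by linarith
    have hloc : IsLocalMax Φ (s k) := by
      have hΦ0 : Φ (s k) = 0 := intervalIntegral.integral_same
      have h1 : s (k-1) < s k := sstrict (k-1) k (by omega) (by omega)
      have h2 : s k < s (k+1) := hs_strict k hkN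
      have : ∀ᶠ w in nhds (s k), Φ w ≤ Φ (s k) := by
        filter_upwards [Ioo_mem_nhds h1 h2] with w hw
        rw [hΦ0]
        exact hup_le w hw
      exact this
    have hd : HasDerivAt Φ (F (s k)) (s k) :=
      intervalIntegral.integral_hasDerivAt_right (hFc.intervalIntegrable _ _)
        (hFc.stronglyMeasurableAtFilter _ _) hFc.continuousAt
    have hzero : F (s k) = 0 := hloc.hasDerivAt_eq_zero hd
    have hhk : 0 < h (s k) := hh_pos (s k) (sIcc k (by omega))
    have : (s k * v (q k) - c (q k)) * h (s k)
        = (s k * v (q (k+1)) - c (q (k+1))) * h (s k) := by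
      simp only [hF] at hzero
      linarith
    exact mul_right_cancel₀ (ne_of_gt hhk) this
  -- the interval (x k, x (k+1))
  have hk2 : 2 ≤ k + 1 := by omega
  have hk1N : k + 1 ≤ N + 1 := by omega
  have hb : x (k+1) ∈ Ioo (s k) (s (k+1)) := by
    have := hx_mem (k+1) hk2 hk1N
    simpa using this
  have hsk_pos : 0 < s k := by
    rw [← hs0]; exact sstrict 0 k (by omega) (by omega)
  have hbIoo : x (k+1) ∈ Ioo (0:ℝ) 1 :=
    ⟨lt_trans hsk_pos hb.1, lt_of_lt_of_le hb.2 (sIcc (k+1) (by omega)).2⟩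
  have hqk1 : q (k+1) = qstar (x (k+1)) := stepA (k+1) hk2 hk1N
  have hπ'b : deriv π (x (k+1)) = v (q (k+1)) := by
    rw [hqk1]; exact envlem _ hbIoo
  have hPb : x (k+1) * deriv π (x (k+1)) - π (x (k+1)) = c (q (k+1)) := by
    rw [hπ'b, hπval _ ⟨hbIoo.1, hbIoo.2.le⟩, hqk1]; ring
  have haprop : deriv π (x k) = v (q k) ∧
      (x k * deriv π (x k) - π (x k) = c (q k)) ∧ 0 ≤ x k ∧ x k < s k := by
    by_cases hk : k = 1
    · subst hk
      rw [hx1, hq1, hπ'0, hπ0, hv0, hc0]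
      refine ⟨rfl, by ring, le_rfl, hsk_pos⟩
    · have hk2' : 2 ≤ k := by omega
      have hxa := hx_mem k hk2' (by omega)
      have haIoo : x k ∈ Ioo (0:ℝ) 1 := hxIoo k hk2' (by omega)
      have hqk : q k = qstar (x k) := stepA k hk2' (by omega)
      refine ⟨by rw [hqk]; exact envlem _ haIoo, ?_, haIoo.1.le, hxa.2⟩
      rw [envlem _ haIoo, hπval _ ⟨haIoo.1, haIoo.2.le⟩, hqk]
      ring
  have hab : x k < x (k+1) := lt_trans haprop.2.2.2 hb.1
  have hden : 0 < ∫ t in (x k)..(x (k+1)), deriv (deriv π) t := by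
    refine intervalIntegral.intervalIntegral_pos_of_pos_on (cπ''.intervalIntegrable _ _)
      (fun t ht => hπ'' t ⟨lt_of_le_of_lt haprop.2.2.1 ht.1,
        le_trans ht.2.le hbIoo.2.le⟩) hab
  have hdenv : 0 < v (q (k+1)) - v (q k) := by
    have := ftc1 (x k) (x (k+1))
    rw [hπ'b, haprop.1] at this
    linarith
  rw [condMean, ftc1, ftc2, hPb, haprop.2.1, hπ'b, haprop.1,
    eq_div_iff (ne_of_gt hdenv)]
  linarith [foc]
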